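/- Let H : L² → L² be a map and let Π be a real symmetric 2×2 matrix with entries π₁₁, π₁₂, π₂₂. Then the following are equivalent: (i) for all u₁, u₂ ∈ L², writing Δu = u₁ − u₂ and Δy = Hu₁ − Hu₂, one has π₁₁·‖Δu‖² + 2·π₁₂·⟪Δu, Δy⟫ + π₂₂·‖Δy‖² ≥ 0 (the static incremental soft IQC with multiplier Π ⊗ I); (ii) SRG(H) ⊆ S(Π). -/

import Mathlib

open scoped RealInnerProductSpace Classical
open MeasureTheory

/-- `L²` : square-integrable signals `[0,∞) → ℝⁿ`, with
`⟪u, v⟫ = ∫₀^∞ u(t)ᵀ v(t) dt`. -/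
noncomputable abbrev L2 (n : ℕ) :=
  Lp (EuclideanSpace ℝ (Fin n)) 2 (volume.restrict (Set.Ici (0 : ℝ)))

/-- The region `S(Π)` in the complex plane associated with a real symmetric 2×2 matrix `Π`
with entries `π₁₁, π₁₂, π₂₂`:  `S(Π) = {z ∈ ℂ : π₁₁ + 2·π₁₂·Re z + π₂₂·|z|² ≥ 0}`. -/
def SRegion (p11 p12 p22 : ℝ) : Set ℂ :=
  {z : ℂ | 0 ≤ p11 + 2 * p12 * z.re + p22 * ‖z‖ ^ 2}

/-- SRG point `z₊(u, y) = (‖y‖/‖u‖)·exp(+i·arccos(⟪u,y⟫/(‖u‖‖y‖)))` (and `0` for `y = 0`). -/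
noncomputable def srgPlus {E : Type*} [NormedAddCommGroup E] [InnerProductSpace ℝ E]
    (u y : E) : ℂ :=
  if y = 0 then 0 else
    ((‖y‖ / ‖u‖ : ℝ) : ℂ) *
      Complex.exp (Complex.I * (Real.arccos (⟪u, y⟫ / (‖u‖ * ‖y‖)) : ℝ))

/-- SRG point `z₋(u, y) = (‖y‖/‖u‖)·exp(−i·arccos(⟪u,y⟫/(‖u‖‖y‖)))` (and `0` for `y = 0`). -/
noncomputable def srgMinus {E : Type*} [NormedAddCommGroup E] [InnerProductSpace ℝ E]
    (u y : E) : ℂ :=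
  if y = 0 then 0 else
    ((‖y‖ / ‖u‖ : ℝ) : ℂ) *
      Complex.exp (-Complex.I * (Real.arccos (⟪u, y⟫ / (‖u‖ * ‖y‖)) : ℝ))

/-- The soft scaled relative graph of a map `H : L² → L²`:
`SRG(H) = ⋃ {z_±(Δu, Δy)}` over all `u₁, u₂ ∈ L²` with `u₁ ≠ u₂`, where
`Δu = u₁ − u₂` and `Δy = Hu₁ − Hu₂`. -/
noncomputable def softSRG {n : ℕ} (H : L2 n → L2 n) : Set ℂ :=
  {z : ℂ | ∃ u₁ u₂ : L2 n, u₁ ≠ u₂ ∧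
    (z = srgPlus (u₁ - u₂) (H u₁ - H u₂) ∨ z = srgMinus (u₁ - u₂) (H u₁ - H u₂))}

lemma srg_re_abs {E : Type*} [NormedAddCommGroup E] [InnerProductSpace ℝ E]
    (u y : E) (hu : u ≠ 0) (z : ℂ)
    (hz : z = srgPlus u y ∨ z = srgMinus u y) :
    z.re = ⟪u, y⟫ / ‖u‖ ^ 2 ∧ ‖z‖ = ‖y‖ / ‖u‖ := by
  by_cases hy : y = 0
  · rcases hz with rfl | rfl <;>
      simp [srgPlus, srgMinus, hy]
  have hun : (0:ℝ) < ‖u‖ := norm_pos_iff.mpr hu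
  have hyn : (0:ℝ) < ‖y‖ := norm_pos_iff.mpr hy
  set c : ℝ := ⟪u, y⟫ / (‖u‖ * ‖y‖) with hc
  have hc1 : |c| ≤ 1 := by
    rw [hc, abs_div]
    rw [div_le_one (by positivity)]
    calc |⟪u, y⟫| ≤ ‖u‖ * ‖y‖ := abs_real_inner_le_norm u y
    _ = |‖u‖ * ‖y‖| := (abs_of_pos (by positivity)).symm
  have hcos : Real.cos (Real.arccos c) = c :=
    Real.cos_arccos (neg_le_of_abs_le hc1) (le_of_abs_le hc1)
  have hre : (‖y‖ / ‖u‖) * c = ⟪u, y⟫ / ‖u‖ ^ 2 := by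
    rw [hc]
    field_simp
  rcases hz with rfl | rfl
  · constructor
    · rw [srgPlus, if_neg hy]
      rw [mul_comm Complex.I]
      rw [Complex.exp_mul_I]
      simp [Complex.cos_ofReal_re, ← Complex.ofReal_cos, ← Complex.ofReal_sin, ← hc, hcos, hre]
    · rw [srgPlus, if_neg hy]
      rw [norm_mul, Complex.norm_exp]
      simp [abs_of_nonneg (by positivity : (0:ℝ) ≤ ‖y‖/‖u‖)]
  · constructor
    · rw [srgMinus, if_neg hy]
      have h1 : -Complex.I * ((Real.arccos c : ℝ) : ℂ) =
          ((-Real.arccos c : ℝ) : ℂ) * Complex.I := by push_cast; ring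
      rw [h1, Complex.exp_mul_I]
      simp [← Complex.ofReal_cos, ← Complex.ofReal_sin, Real.cos_neg, ← hc, hcos, hre]
    · rw [srgMinus, if_neg hy]
      rw [norm_mul, Complex.norm_exp]
      simp [abs_of_nonneg (by positivity : (0:ℝ) ≤ ‖y‖/‖u‖)]

/-- A map `H : L² → L²` satisfies the static incremental soft IQC with multiplier `Π ⊗ I`
(`Π` real symmetric 2×2 with entries `π₁₁, π₁₂, π₂₂`) if and only if `SRG(H) ⊆ S(Π)`. -/
theorem static_soft_iqc_iff_srg_subset (n : ℕ) (H : L2 n → L2 n) (p11 p12 p22 : ℝ) :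
    (∀ u₁ u₂ : L2 n,
        0 ≤ p11 * ‖u₁ - u₂‖ ^ 2 + 2 * p12 * ⟪u₁ - u₂, H u₁ - H u₂⟫ +
          p22 * ‖H u₁ - H u₂‖ ^ 2) ↔
      softSRG H ⊆ SRegion p11 p12 p22 := by
  constructor
  · intro h z hz
    obtain ⟨u₁, u₂, hne, hz⟩ := hz
    have hu : u₁ - u₂ ≠ 0 := sub_ne_zero.mpr hne
    obtain ⟨hre, habs⟩ := srg_re_abs (u₁ - u₂) (H u₁ - H u₂) hu z hz
    have hun : (0:ℝ) < ‖u₁ - u₂‖ := norm_pos_iff.mpr hu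
    have h0 := h u₁ u₂
    show 0 ≤ p11 + 2 * p12 * z.re + p22 * ‖z‖ ^ 2
    rw [hre, habs]
    have key : p11 + 2 * p12 * (⟪u₁ - u₂, H u₁ - H u₂⟫ / ‖u₁ - u₂‖ ^ 2) +
        p22 * (‖H u₁ - H u₂‖ / ‖u₁ - u₂‖) ^ 2 =
        (p11 * ‖u₁ - u₂‖ ^ 2 + 2 * p12 * ⟪u₁ - u₂, H u₁ - H u₂⟫ +
          p22 * ‖H u₁ - H u₂‖ ^ 2) / ‖u₁ - u₂‖ ^ 2 := by
      field_simp
    rw [key]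
    positivity
  · intro h u₁ u₂
    by_cases hne : u₁ = u₂
    · simp [hne]
    have hu : u₁ - u₂ ≠ 0 := sub_ne_zero.mpr hne
    have hun : (0:ℝ) < ‖u₁ - u₂‖ := norm_pos_iff.mpr hu
    have hz : srgPlus (u₁ - u₂) (H u₁ - H u₂) ∈ softSRG H :=
      ⟨u₁, u₂, hne, Or.inl rfl⟩
    have hmem := h hz
    obtain ⟨hre, habs⟩ := srg_re_abs (u₁ - u₂) (H u₁ - H u₂) hu
      (srgPlus (u₁ - u₂) (H u₁ - H u₂)) (Or.inl rfl)
    have hmem' : 0 ≤ p11 + 2 * p12 * (⟪u₁ - u₂, H u₁ - H u₂⟫ / ‖u₁ - u₂‖ ^ 2) +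
        p22 * (‖H u₁ - H u₂‖ / ‖u₁ - u₂‖) ^ 2 := by
      have := hmem
      simp only [SRegion, Set.mem_setOf_eq, hre, habs] at this
      exact this
    have key : p11 * ‖u₁ - u₂‖ ^ 2 + 2 * p12 * ⟪u₁ - u₂, H u₁ - H u₂⟫ +
        p22 * ‖H u₁ - H u₂‖ ^ 2 =
        (p11 + 2 * p12 * (⟪u₁ - u₂, H u₁ - H u₂⟫ / ‖u₁ - u₂‖ ^ 2) +
          p22 * (‖H u₁ - H u₂‖ / ‖u₁ - u₂‖) ^ 2) * ‖u₁ - u₂‖ ^ 2 := by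
      field_simp
    rw [key]
    positivity
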